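/- Let G be a group, let φ : Multiplicative (ZMod 2) →* MulAut (G × G) be a homomorphism with φ (Multiplicative.ofAdd 1) equal to the coordinate-swap automorphism MulEquiv.prodComm G G, and let W = (G × G) ⋊[φ] Multiplicative (ZMod 2) be the corresponding wreath product G ≀ ℤ₂. Let δ : G →* W be the diagonal embedding g ↦ ⟨(g, g), 1⟩, fix g : G, let w₀ = ⟨(g, 1), Multiplicative.ofAdd 1⟩ : W (a square root of δ g), and let C = ⁅Subgroup.normalClosure {g}, (⊤ : Subgroup G)⁆ be the mutual commutator subgroup of the normal closure of g with G. Then the subgroup H = Subgroup.closure (Set.range δ ∪ {w₀}) of W satisfies: for all g₁ g₂ : G, ⟨(g₁, g₂), 1⟩ ∈ H ↔ g₁ * g₂⁻¹ ∈ C, and ⟨(g₁, g₂), Multiplicative.ofAdd 1⟩ ∈ H ↔ g⁻¹ * (g₁ * g₂⁻¹) ∈ C. -/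

import Mathlib

open scoped commutatorElement

theorem subgroup_generated_by_diagonal_and_root (G : Type) [Group G]
    (φ : Multiplicative (ZMod 2) →* MulAut (G × G))
    (hφ : φ (Multiplicative.ofAdd 1) = (MulEquiv.prodComm : (G × G) ≃* (G × G)))
    (δ : G →* (G × G) ⋊[φ] Multiplicative (ZMod 2))
    (hδ : ∀ g : G, δ g = ⟨(g, g), 1⟩)
    (g : G) :
    ∀ g₁ g₂ : G,
      ((⟨(g₁, g₂), 1⟩ : (G × G) ⋊[φ] Multiplicative (ZMod 2)) ∈
          Subgroup.closure (Set.range δ ∪ {⟨(g, 1), Multiplicative.ofAdd 1⟩}) ↔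
        g₁ * g₂⁻¹ ∈ ⁅Subgroup.normalClosure {g}, (⊤ : Subgroup G)⁆) ∧
      ((⟨(g₁, g₂), Multiplicative.ofAdd 1⟩ : (G × G) ⋊[φ] Multiplicative (ZMod 2)) ∈
          Subgroup.closure (Set.range δ ∪ {⟨(g, 1), Multiplicative.ofAdd 1⟩}) ↔
        g⁻¹ * (g₁ * g₂⁻¹) ∈ ⁅Subgroup.normalClosure {g}, (⊤ : Subgroup G)⁆) := by
  set C := ⁅Subgroup.normalClosure ({g} : Set G), (⊤ : Subgroup G)⁆ with hC
  haveI hCn : C.Normal := Subgroup.commutator_normal _ _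
  set π : G →* G ⧸ C := QuotientGroup.mk' C with hπ
  have hmem : ∀ a : G, a ∈ C ↔ π a = 1 := fun a => (QuotientGroup.eq_one_iff a).symm
  have hc : ∀ q : G ⧸ C, Commute (π g) q := by
    intro q
    refine QuotientGroup.induction_on q (fun x => ?_)
    have h : ⁅g, x⁆ ∈ C := Subgroup.commutator_mem_commutator
      (Subgroup.subset_normalClosure (Set.mem_singleton g)) (Subgroup.mem_top x)
    have h1 := (hmem _).mp h
    rw [map_commutatorElement] at h1
    exact commutatorElement_eq_one_iff_commute.mp h1
  set H := Subgroup.closure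
    (Set.range δ ∪ {(⟨(g, 1), Multiplicative.ofAdd 1⟩ : (G × G) ⋊[φ] Multiplicative (ZMod 2))}) with hH
  have htwo : ∀ t : Multiplicative (ZMod 2), t = 1 ∨ t = Multiplicative.ofAdd 1 := by decide
  -- a helper for multiplying elements with trivial right component
  have hmul1 : ∀ (p q : G × G) (s : Multiplicative (ZMod 2)),
      (⟨p, 1⟩ : (G × G) ⋊[φ] Multiplicative (ZMod 2)) * ⟨q, s⟩ = ⟨p * q, s⟩ := by
    intro p q s
    ext <;> simp [SemidirectProduct.mul_left, SemidirectProduct.mul_right]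
  have hmulw : ∀ (p q : G × G) (s : Multiplicative (ZMod 2)),
      (⟨p, Multiplicative.ofAdd 1⟩ : (G × G) ⋊[φ] Multiplicative (ZMod 2)) * ⟨q, s⟩
        = ⟨p * Prod.swap q, Multiplicative.ofAdd 1 * s⟩ := by
    intro p q s
    ext <;> simp [SemidirectProduct.mul_left, SemidirectProduct.mul_right, hφ]
  -- the invariant
  set cond : (G × G) ⋊[φ] Multiplicative (ZMod 2) → Prop :=
    fun w => π w.left.1 = π g ^ (Multiplicative.toAdd w.right).val * π w.left.2 with hcond
  -- forward direction
  have hfwd : ∀ w : (G × G) ⋊[φ] Multiplicative (ZMod 2), w ∈ H → cond w := by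
    intro w hw
    refine Subgroup.closure_induction (p := fun w _ => cond w) ?_ ?_ ?_ ?_ hw
    · rintro x (⟨y, rfl⟩ | hx)
      · rw [hδ]; simp [hcond]
      · simp only [Set.mem_singleton_iff] at hx
        subst hx
        simp [hcond, ZMod.val_one]
    · simp [hcond]
    · rintro ⟨⟨a₁, a₂⟩, t⟩ ⟨⟨b₁, b₂⟩, s⟩ - - ha hb
      simp only [hcond] at ha hb ⊢
      rcases htwo t with rfl | rfl <;> rcases htwo s with rfl | rfl <;>
        simp only [SemidirectProduct.mul_left, SemidirectProduct.mul_right, map_one,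
          MulAut.one_apply, hφ, MulEquiv.coe_prodComm, Prod.swap_prod_mk,
          Prod.mk_mul_mk, map_mul, toAdd_one, toAdd_ofAdd, ZMod.val_zero, pow_zero,
          one_mul, mul_one, pow_one, ZMod.val_one] at ha hb ⊢
      · rw [ha, hb]
      · rw [ha, hb, ← mul_assoc, ← (hc (π a₂)).eq, mul_assoc]
      · rw [ha, hb, mul_assoc]
      · have h2 : Multiplicative.toAdd
            (Multiplicative.ofAdd (1 : ZMod 2) * Multiplicative.ofAdd 1) = (0 : ZMod 2) := by
          decide
        have hv0 : ZMod.val (0 : ZMod 2) = 0 := rfl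
        rw [h2, hv0, pow_zero, one_mul, ha, hb, ← mul_assoc, ← (hc (π a₂)).eq, mul_assoc]
    · rintro ⟨⟨a₁, a₂⟩, t⟩ - ha
      simp only [hcond] at ha ⊢
      have hinv : (Multiplicative.ofAdd (1 : ZMod 2))⁻¹ = Multiplicative.ofAdd 1 := by decide
      rcases htwo t with rfl | rfl <;>
        simp only [SemidirectProduct.inv_left, SemidirectProduct.inv_right, inv_one, hinv,
          map_one, MulAut.one_apply, hφ, MulEquiv.coe_prodComm, toAdd_one, ZMod.val_zero,
          pow_zero, one_mul, Prod.inv_mk, Prod.swap_prod_mk, map_inv, toAdd_ofAdd,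
          ZMod.val_one, pow_one] at ha ⊢
      · rw [ha]
      · rw [ha, mul_inv_rev, ← mul_assoc, (hc (π a₂)⁻¹).eq, mul_inv_cancel_right]
  -- generators are in H
  have hδH : ∀ x : G, δ x ∈ H :=
    fun x => Subgroup.subset_closure (Or.inl (Set.mem_range_self x))
  have hwH : (⟨(g, 1), Multiplicative.ofAdd 1⟩ : (G × G) ⋊[φ] Multiplicative (ZMod 2)) ∈ H :=
    Subgroup.subset_closure (Or.inr rfl)
  -- the subgroup P of G
  set P : Subgroup G :=
    { carrier := {a : G | (⟨(a, 1), 1⟩ : (G × G) ⋊[φ] Multiplicative (ZMod 2)) ∈ H}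
      one_mem' := by
        have : (⟨((1 : G), 1), 1⟩ : (G × G) ⋊[φ] Multiplicative (ZMod 2)) = 1 := rfl
        simp only [Set.mem_setOf_eq, this]; exact one_mem H
      mul_mem' := by
        intro a b ha hb
        simp only [Set.mem_setOf_eq] at ha hb ⊢
        have h2 := mul_mem ha hb
        rw [hmul1] at h2
        simpa using h2
      inv_mem' := by
        intro a ha
        simp only [Set.mem_setOf_eq] at ha ⊢
        have := inv_mem ha
        have heq : (⟨((a : G), 1), 1⟩ : (G × G) ⋊[φ] Multiplicative (ZMod 2))⁻¹ = ⟨(a⁻¹, 1), 1⟩ := by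
          ext <;> simp [SemidirectProduct.inv_left, SemidirectProduct.inv_right]
        rwa [heq] at this } with hP
  have hPmem : ∀ a : G, a ∈ P ↔ (⟨(a, 1), 1⟩ : (G × G) ⋊[φ] Multiplicative (ZMod 2)) ∈ H := fun a => Iff.rfl
  haveI hPn : P.Normal := by
    constructor
    intro a ha y
    rw [hPmem] at ha ⊢
    have h1 : δ y * ⟨(a, 1), 1⟩ * (δ y)⁻¹ = ⟨(y * a * y⁻¹, 1), 1⟩ := by
      rw [← map_inv, hδ, hδ, hmul1, hmul1]
      simp [mul_assoc]
    have := mul_mem (mul_mem (hδH y) ha) (inv_mem (hδH y))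
    rwa [h1] at this
  -- commutators of g are in P
  have hgP : ∀ x : G, ⁅g, x⁆ ∈ P := by
    intro x
    rw [hPmem]
    have heq : (⟨(⁅g, x⁆, 1), 1⟩ : (G × G) ⋊[φ] Multiplicative (ZMod 2)) * (δ x * ⟨(g, 1), Multiplicative.ofAdd 1⟩)
        = ⟨(g, 1), Multiplicative.ofAdd 1⟩ * δ x := by
      rw [hδ, hmul1, hmulw, hmul1]
      simp [commutatorElement_def, mul_assoc]
    have h2 : (⟨(⁅g, x⁆, 1), 1⟩ : (G × G) ⋊[φ] Multiplicative (ZMod 2))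
        = (⟨(g, 1), Multiplicative.ofAdd 1⟩ * δ x)
          * (δ x * ⟨(g, 1), Multiplicative.ofAdd 1⟩)⁻¹ := by
      rw [← heq, mul_inv_cancel_right]
    rw [h2]
    exact mul_mem (mul_mem hwH (hδH x)) (inv_mem (mul_mem (hδH x) hwH))
  -- C ≤ P
  have hCP : C ≤ P := by
    set ρ : G →* G ⧸ P := QuotientGroup.mk' P with hρ
    have hker : ∀ a : G, a ∈ P ↔ ρ a = 1 := fun a => (QuotientGroup.eq_one_iff a).symm
    have hgZ : g ∈ (Subgroup.center (G ⧸ P)).comap ρ := by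
      rw [Subgroup.mem_comap, Subgroup.mem_center_iff]
      intro q
      refine QuotientGroup.induction_on q (fun x => ?_)
      have h1 := (hker _).mp (hgP x)
      rw [map_commutatorElement] at h1
      exact (commutatorElement_eq_one_iff_commute.mp h1).symm.eq
    have hN : Subgroup.normalClosure ({g} : Set G) ≤ (Subgroup.center (G ⧸ P)).comap ρ :=
      Subgroup.normalClosure_le_normal (by simpa using hgZ)
    refine Subgroup.commutator_le.mpr fun n hn x _ => ?_
    have hcen : ρ n ∈ Subgroup.center (G ⧸ P) := Subgroup.mem_comap.mp (hN hn)

    rw [hker, map_commutatorElement]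
    exact commutatorElement_eq_one_iff_commute.mpr
      ((Subgroup.mem_center_iff.mp hcen (ρ x)).symm)
  -- conclusion
  intro g₁ g₂
  constructor
  · constructor
    · intro hmemH
      have h1 := hfwd _ hmemH
      simp only [hcond, toAdd_one, ZMod.val_zero, pow_zero, one_mul] at h1
      rw [hmem, map_mul, map_inv, h1]
      simp
    · intro hCmem
      have h1 : (⟨(g₁ * g₂⁻¹, 1), 1⟩ : (G × G) ⋊[φ] Multiplicative (ZMod 2)) ∈ H := (hPmem _).mp (hCP hCmem)
      have h2 := mul_mem h1 (hδH g₂)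
      rwa [hδ, hmul1, Prod.mk_mul_mk, one_mul, inv_mul_cancel_right] at h2
  · constructor
    · intro hmemH
      have h1 := hfwd _ hmemH
      simp only [hcond, toAdd_ofAdd, ZMod.val_one, pow_one] at h1
      rw [hmem, map_mul, map_mul, map_inv, map_inv, h1]
      group
    · intro hCmem
      -- g₁ * g⁻¹ * g₂⁻¹ ∈ C
      have h0 : g₁ * g⁻¹ * g₂⁻¹ ∈ C := by
        rw [hmem] at hCmem ⊢
        simp only [map_mul, map_inv] at hCmem ⊢
        have : π g₁ * (π g)⁻¹ = (π g)⁻¹ * π g₁ := ((hc (π g₁)).inv_left.eq).symm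
        rw [this, mul_assoc, ← mul_assoc] at *
        simpa [mul_assoc] using hCmem
      have h1 : (⟨(g₁ * g⁻¹ * g₂⁻¹, 1), 1⟩ : (G × G) ⋊[φ] Multiplicative (ZMod 2)) ∈ H := (hPmem _).mp (hCP h0)
      have h2 := mul_mem (mul_mem h1 (hδH g₂)) hwH
      rw [hδ, hmul1, hmul1, Prod.mk_mul_mk, Prod.mk_mul_mk] at h2
      simpa [mul_assoc] using h2
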